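/- For density matrices A and B on a finite-dimensional Hilbert space with B positive definite, D(A‖B) ≤ Tr((A − B)² B^{-1}) = χ²(A‖B). -/

import Mathlib

open Matrix
open scoped ComplexOrder

variable {d : Type*} [Fintype d] [DecidableEq d]

open Classical in
/-- Functional calculus for Hermitian matrices: apply `f` to the eigenvalues.
Returns `0` if the matrix is not Hermitian. -/
noncomputable def mfun (f : ℝ → ℝ) (A : Matrix d d ℂ) : Matrix d d ℂ :=
  if hA : A.IsHermitian then
    (hA.eigenvectorUnitary : Matrix d d ℂ) *
      Matrix.diagonal (fun i => (f (hA.eigenvalues i) : ℂ)) *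
      star (hA.eigenvectorUnitary : Matrix d d ℂ)
  else 0

/-- Matrix logarithm on the support (eigenvalues `≤ 0` are mapped to `0`). -/
noncomputable def logm (A : Matrix d d ℂ) : Matrix d d ℂ :=
  mfun (fun x => if x ≤ 0 then 0 else Real.log x) A

/-- Matrix real power on the support (eigenvalues `≤ 0` are mapped to `0`). -/
noncomputable def powm (A : Matrix d d ℂ) (p : ℝ) : Matrix d d ℂ :=
  mfun (fun x => if x ≤ 0 then 0 else x ^ p) A

/-- Quantum relative entropy `D(ρ‖σ) = Tr(ρ (log ρ − log σ))` (natural log). -/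
noncomputable def qRelEnt (ρ σ : Matrix d d ℂ) : ℝ :=
  ((ρ * (logm ρ - logm σ)).trace).re

/-- The support of `ρ` is contained in the support of `σ` (kernel containment,
equivalent to range containment for Hermitian matrices). -/
def SuppSubset (ρ σ : Matrix d d ℂ) : Prop :=
  ∀ v : d → ℂ, σ.mulVec v = 0 → ρ.mulVec v = 0

/-- Trace norm of a Hermitian matrix: `Tr |A|`. -/
noncomputable def traceNorm (A : Matrix d d ℂ) : ℝ :=
  ((mfun (fun x => |x|) A).trace).re


lemma mfun_eq {A : Matrix d d ℂ} (hA : A.IsHermitian) (f : ℝ → ℝ) :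
    mfun f A = (hA.eigenvectorUnitary : Matrix d d ℂ) *
      Matrix.diagonal (fun i => (f (hA.eigenvalues i) : ℂ)) *
      star (hA.eigenvectorUnitary : Matrix d d ℂ) := by
  rw [mfun]; exact dif_pos hA

lemma mfun_mul {A : Matrix d d ℂ} (hA : A.IsHermitian) (f g : ℝ → ℝ) :
    mfun f A * mfun g A = mfun (fun x => f x * g x) A := by
  rw [mfun_eq hA, mfun_eq hA, mfun_eq hA]
  have h1 : star (hA.eigenvectorUnitary : Matrix d d ℂ) *
      (hA.eigenvectorUnitary : Matrix d d ℂ) = 1 :=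
    Matrix.mem_unitaryGroup_iff'.mp hA.eigenvectorUnitary.2
  rw [show ∀ U D1 W D2 : Matrix d d ℂ, U * D1 * W * (U * D2 * W) = U * (D1 * (W * U) * D2) * W
    from fun _ _ _ _ => by noncomm_ring, h1]
  simp [Matrix.diagonal_mul_diagonal, mul_assoc]

lemma mfun_id {A : Matrix d d ℂ} (hA : A.IsHermitian) : mfun (fun x => x) A = A := by
  rw [mfun_eq hA]
  exact hA.spectral_theorem.symm

lemma mfun_congr {A : Matrix d d ℂ} (hA : A.IsHermitian) {f g : ℝ → ℝ}
    (h : ∀ i, f (hA.eigenvalues i) = g (hA.eigenvalues i)) : mfun f A = mfun g A := by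
  rw [mfun_eq hA, mfun_eq hA]
  congr 2
  ext i j
  simp [Matrix.diagonal_apply, h i]

lemma mfun_one {A : Matrix d d ℂ} (hA : A.IsHermitian) : mfun (fun _ => 1) A = 1 := by
  rw [mfun_eq hA]
  have h1 : (hA.eigenvectorUnitary : Matrix d d ℂ) *
      star (hA.eigenvectorUnitary : Matrix d d ℂ) = 1 :=
    Matrix.mem_unitaryGroup_iff.mp hA.eigenvectorUnitary.2
  simp only [Complex.ofReal_one, Matrix.diagonal_one, Matrix.mul_one]
  exact h1

lemma trace_mfun {A : Matrix d d ℂ} (hA : A.IsHermitian) (f : ℝ → ℝ) :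
    (mfun f A).trace = ((∑ i, f (hA.eigenvalues i) : ℝ) : ℂ) := by
  rw [mfun_eq hA, Matrix.trace_mul_cycle]
  have h1 : star (hA.eigenvectorUnitary : Matrix d d ℂ) *
      (hA.eigenvectorUnitary : Matrix d d ℂ) = 1 :=
    Matrix.mem_unitaryGroup_iff'.mp hA.eigenvectorUnitary.2
  rw [h1, one_mul, Matrix.trace_diagonal]
  push_cast
  rfl

lemma trace_diag_conj (f g : d → ℂ) (M : Matrix d d ℂ) :
    (Matrix.diagonal f * (M * Matrix.diagonal g * star M)).trace =
      ∑ i, ∑ j, f i * g j * (M i j * star (M i j)) := by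
  rw [Matrix.trace]
  refine Finset.sum_congr rfl fun i _ => ?_
  rw [Matrix.diag_apply, Matrix.diagonal_mul, Matrix.mul_apply, Finset.mul_sum]
  refine Finset.sum_congr rfl fun j _ => ?_
  rw [Matrix.mul_diagonal, Matrix.star_apply]
  ring

set_option maxHeartbeats 1000000 in
lemma trace_mfun_pair {A B : Matrix d d ℂ} (hA : A.IsHermitian) (hB : B.IsHermitian)
    (f g : ℝ → ℝ) :
    (mfun f A * mfun g B).trace =
      ((∑ i, ∑ j, f (hA.eigenvalues i) * g (hB.eigenvalues j) *
        Complex.normSq ((star (hA.eigenvectorUnitary : Matrix d d ℂ) *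
          (hB.eigenvectorUnitary : Matrix d d ℂ)) i j) : ℝ) : ℂ) := by
  set U := (hA.eigenvectorUnitary : Matrix d d ℂ) with hU
  set V := (hB.eigenvectorUnitary : Matrix d d ℂ) with hV
  set M := star U * V with hM
  have hVU : star V * U = star M := by rw [hM, StarMul.star_mul, star_star]
  rw [mfun_eq hA, mfun_eq hB]
  have rearr : ∀ X D1 Y D2 : Matrix d d ℂ,
      X * D1 * star X * (Y * D2 * star Y) =
        X * (D1 * (star X * Y * D2)) * star Y := by
    intro X D1 Y D2
    simp only [Matrix.mul_assoc]
  have key := rearr U (Matrix.diagonal (fun i => (f (hA.eigenvalues i) : ℂ))) V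
      (Matrix.diagonal (fun j => (g (hB.eigenvalues j) : ℂ)))
  rw [key, Matrix.trace_mul_cycle, hVU, Matrix.trace_mul_comm, ← hM,
    Matrix.mul_assoc, trace_diag_conj]
  push_cast
  refine Finset.sum_congr rfl fun i _ => Finset.sum_congr rfl fun j _ => ?_
  simp [Complex.star_def, Complex.mul_conj]

lemma unitary_row_sum {M : Matrix d d ℂ} (hM : M ∈ Matrix.unitaryGroup d ℂ) (i : d) :
    ∑ j, Complex.normSq (M i j) = 1 := by
  have h := Matrix.mem_unitaryGroup_iff.mp hM
  have h2 : (M * star M) i i = 1 := by rw [h, Matrix.one_apply_eq]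
  rw [Matrix.mul_apply] at h2
  have he : ∀ j, M i j * star M j i = (Complex.normSq (M i j) : ℂ) := fun j => by
    rw [Matrix.star_apply, Complex.star_def, Complex.mul_conj]
  rw [Finset.sum_congr rfl (fun j _ => he j), ← Complex.ofReal_sum] at h2
  exact_mod_cast h2

lemma pointwise_ineq {a b w : ℝ} (ha : 0 ≤ a) (hb : 0 < b) (hw : 0 ≤ w) :
    a * (if a ≤ 0 then 0 else Real.log a) * w - a * (if b ≤ 0 then 0 else Real.log b) * w ≤
      (a * a) * (if b ≤ 0 then 0 else b⁻¹) * w - a * w := by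
  rw [if_neg (not_le.mpr hb), if_neg (not_le.mpr hb)]
  rcases eq_or_lt_of_le ha with h0 | hapos
  · simp [← h0]
  · rw [if_neg (not_le.mpr hapos)]
    have h := Real.log_le_sub_one_of_pos (div_pos hapos hb)
    rw [Real.log_div (ne_of_gt hapos) (ne_of_gt hb), div_eq_mul_inv] at h
    have h2 := mul_le_mul_of_nonneg_right
      (mul_le_mul_of_nonneg_left h (le_of_lt hapos)) hw
    nlinarith [h2]

/-- For density matrices `A`, `B` with `B` positive definite,
`D(A‖B) ≤ Tr((A − B)² B⁻¹) = χ²(A‖B)`. -/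
theorem qRelEnt_le_chiSq (A B : Matrix d d ℂ)
    (hA : A.PosSemidef) (hA1 : A.trace = 1)
    (hB : B.PosDef) (hB1 : B.trace = 1) :
    qRelEnt A B ≤ (((A - B) * (A - B) * B⁻¹).trace).re := by
  have hAh := hA.1
  have hBh := hB.1
  set a : d → ℝ := hAh.eigenvalues with ha_def
  set b : d → ℝ := hBh.eigenvalues with hb_def
  set w : d → d → ℝ := fun i j => Complex.normSq
    ((star (hAh.eigenvectorUnitary : Matrix d d ℂ) *
      (hBh.eigenvectorUnitary : Matrix d d ℂ)) i j) with hw_def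
  have hann : ∀ i, 0 ≤ a i := hA.eigenvalues_nonneg
  have hbp : ∀ j, 0 < b j := hB.eigenvalues_pos
  have hwnn : ∀ i j, 0 ≤ w i j := fun i j => Complex.normSq_nonneg _
  have hMem : star (hAh.eigenvectorUnitary : Matrix d d ℂ) *
      (hBh.eigenvectorUnitary : Matrix d d ℂ) ∈ Matrix.unitaryGroup d ℂ :=
    mul_mem (Unitary.star_mem hAh.eigenvectorUnitary.2) hBh.eigenvectorUnitary.2
  have hrow : ∀ i, ∑ j, w i j = 1 := fun i => unitary_row_sum hMem i
  set flog : ℝ → ℝ := fun x => if x ≤ 0 then 0 else Real.log x with hflog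
  set finv : ℝ → ℝ := fun x => if x ≤ 0 then 0 else x⁻¹ with hfinv
  -- B⁻¹ = mfun finv B
  have hleft : mfun finv B * B = 1 := by
    nth_rewrite 2 [← mfun_id hBh]
    rw [mfun_mul hBh]
    rw [mfun_congr hBh (g := fun _ => 1) (fun j => by
      simp only [hfinv, if_neg (not_le.mpr (hbp j))]
      have hbj : 0 < hBh.eigenvalues j := hbp j
      rw [if_neg (not_le.mpr hbj)]
      exact inv_mul_cancel₀ (ne_of_gt hbj))]
    exact mfun_one hBh
  have hBinv : B⁻¹ = mfun finv B := Matrix.inv_eq_left_inv hleft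
  have hBBinv : B * B⁻¹ = 1 := by rw [hBinv]; exact mul_eq_one_comm.mp hleft
  have hBinvB : B⁻¹ * B = 1 := by rw [hBinv]; exact hleft
  -- product identities
  have hAA : A * A = mfun (fun x => x * x) A := by
    have h := mfun_mul hAh (fun x => x) (fun x => x)
    rw [mfun_id hAh] at h
    exact h
  have hAlogA : A * logm A = mfun (fun x => x * flog x) A := by
    have h := mfun_mul hAh (fun x => x) flog
    rw [mfun_id hAh] at h
    exact h
  have hAlogB : A * logm B = mfun (fun x => x) A * mfun flog B := by
    rw [mfun_id hAh]; rfl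
  -- trace identities
  have tAA : (A * A * B⁻¹).trace =
      ((∑ i, ∑ j, (a i * a i) * finv (b j) * w i j : ℝ) : ℂ) := by
    rw [hBinv, hAA, trace_mfun_pair hAh hBh]
  have tAlogA : (A * logm A).trace = ((∑ i, a i * flog (a i) : ℝ) : ℂ) := by
    rw [hAlogA, trace_mfun hAh]
  have tAlogB : (A * logm B).trace =
      ((∑ i, ∑ j, a i * flog (b j) * w i j : ℝ) : ℂ) := by
    rw [hAlogB, trace_mfun_pair hAh hBh]
  have htrA : (∑ i, a i) = 1 := by
    have h := trace_mfun hAh (fun x => x)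
    rw [mfun_id hAh, hA1] at h
    exact_mod_cast h.symm
  -- expand the RHS
  have expand : (A - B) * (A - B) * B⁻¹ =
      A * A * B⁻¹ - A * (B * B⁻¹) - B * A * B⁻¹ + B * (B * B⁻¹) := by
    noncomm_ring
  rw [hBBinv, Matrix.mul_one, Matrix.mul_one] at expand
  have tBAB : (B * A * B⁻¹).trace = A.trace := by
    rw [Matrix.trace_mul_cycle, hBinvB, Matrix.one_mul]
  have tRHS : (((A - B) * (A - B) * B⁻¹).trace).re =
      (∑ i, ∑ j, (a i * a i) * finv (b j) * w i j) - 1 := by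
    rw [expand, Matrix.trace_add, Matrix.trace_sub, Matrix.trace_sub, tBAB, hA1, hB1, tAA]
    simp
  -- the LHS
  have tLHS : qRelEnt A B =
      (∑ i, a i * flog (a i)) - ∑ i, ∑ j, a i * flog (b j) * w i j := by
    rw [qRelEnt, Matrix.mul_sub, Matrix.trace_sub, tAlogA, tAlogB]
    simp
  rw [tLHS, tRHS]
  -- reduce to a doubly-indexed comparison
  have e1 : ∀ i, a i * flog (a i) = ∑ j, a i * flog (a i) * w i j := fun i => by
    rw [← Finset.mul_sum, hrow i, mul_one]
  have e2 : ∀ i, a i = ∑ j, a i * w i j := fun i => by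
    rw [← Finset.mul_sum, hrow i, mul_one]
  have main : ∑ i, ∑ j, (a i * flog (a i) * w i j - a i * flog (b j) * w i j) ≤
      ∑ i, ∑ j, ((a i * a i) * finv (b j) * w i j - a i * w i j) :=
    Finset.sum_le_sum fun i _ => Finset.sum_le_sum fun j _ =>
      pointwise_ineq (hann i) (hbp j) (hwnn i j)
  simp only [Finset.sum_sub_distrib] at main
  calc (∑ i, a i * flog (a i)) - ∑ i, ∑ j, a i * flog (b j) * w i j
      = (∑ i, ∑ j, a i * flog (a i) * w i j) - ∑ i, ∑ j, a i * flog (b j) * w i j := by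
        rw [Finset.sum_congr rfl fun i _ => e1 i]
    _ ≤ (∑ i, ∑ j, (a i * a i) * finv (b j) * w i j) - ∑ i, ∑ j, a i * w i j := main
    _ = (∑ i, ∑ j, (a i * a i) * finv (b j) * w i j) - 1 := by
        rw [show (∑ i, ∑ j, a i * w i j) = ∑ i, a i from
          (Finset.sum_congr rfl fun i _ => (e2 i).symm), htrA]
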